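/- Let r > 0, {v₀,v₁,w} a positive oriented orthonormal system, k₀ = √(1+r²)/r, and α(t) = √(1+r²) w + r cos(2πt) v₁ + r sin(2πt) v₀. Define the vector fields along α: W₀(t) = t α̇(t), W₁(t) = α̇(t), W₂(t) = √(1+r²) v₁ + r cos(2πt) w, and W₃(t) = √(1+r²) v₀ + r sin(2πt) w. Then each Wᵢ (i = 0,1,2,3) satisfies ⟨Wᵢ(t), α(t)⟩ₘ = 0 for all t and solves the linearized equation 0 = −D_t²W + ⟨α̇,α̇⟩ₘ W − ⟨W, α̇⟩ₘ α̇ + |α̇|ₘ⁻¹ ⟨D_tW, α̇⟩ₘ k₀ (α ×ₘ α̇) + |α̇|ₘ k₀ (α ×ₘ D_tW), where D_tV(t) = V̇(t) + ⟨V̇(t), α(t)⟩ₘ α(t) and |α̇|ₘ = √⟨α̇,α̇⟩ₘ. -/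

import Mathlib

noncomputable section

open Real

/-- The Minkowski inner product on ℝ³. -/
def mink (v w : Fin 3 → ℝ) : ℝ := v 0 * w 0 + v 1 * w 1 - v 2 * w 2

/-- The twisted cross product on ℝ³. -/
def mcross (v w : Fin 3 → ℝ) : Fin 3 → ℝ :=
  ![v 2 * w 1 - v 1 * w 2, v 0 * w 2 - v 2 * w 0, v 0 * w 1 - v 1 * w 0]

/-- A positive oriented orthonormal system with respect to the Minkowski metric. -/
def posOrth (v₀ v₁ w : Fin 3 → ℝ) : Prop :=
  mink v₀ v₁ = 0 ∧ mink v₀ w = 0 ∧ mink v₁ w = 0 ∧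
  mink v₀ v₀ = 1 ∧ mink v₁ v₁ = 1 ∧ mink w w = -1 ∧
  mcross v₀ v₁ = w

/-- Membership in the hyperbolic plane ℍ ⊂ ℝ³. -/
def inH (x : Fin 3 → ℝ) : Prop := x 2 ^ 2 - x 0 ^ 2 - x 1 ^ 2 = 1 ∧ 0 < x 2

/-- The covariant derivative on ℍ of a tangent vector field `V` along a curve `γ` in ℍ:
`D_t V(t) = V̇(t) + ⟨V̇(t), γ(t)⟩ₘ γ(t)`. -/
def covDt (γ V : ℝ → Fin 3 → ℝ) : ℝ → Fin 3 → ℝ :=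
  fun t => deriv V t + mink (deriv V t) (γ t) • γ t

/-- The linearization of the prescribed geodesic curvature operator along a curve α in ℍ:
`L W = −D_t²W + ⟨α̇,α̇⟩ₘ W − ⟨W,α̇⟩ₘ α̇ + |α̇|ₘ⁻¹ ⟨D_tW,α̇⟩ₘ k₀ (α ×ₘ α̇) + |α̇|ₘ k₀ (α ×ₘ D_tW)`. -/
def linOp (k₀ : ℝ) (α W : ℝ → Fin 3 → ℝ) (t : ℝ) : Fin 3 → ℝ :=
  -(covDt α (covDt α W) t) + mink (deriv α t) (deriv α t) • W t
    - mink (W t) (deriv α t) • deriv α t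
    + ((Real.sqrt (mink (deriv α t) (deriv α t)))⁻¹ * mink (covDt α W t) (deriv α t) * k₀) •
        mcross (α t) (deriv α t)
    + (Real.sqrt (mink (deriv α t) (deriv α t)) * k₀) • mcross (α t) (covDt α W t)


def vec (v₀ v₁ w : Fin 3 → ℝ) (a b c : ℝ) : Fin 3 → ℝ := a • v₀ + b • v₁ + c • w

lemma mink_vec {v₀ v₁ w : Fin 3 → ℝ} (h : posOrth v₀ v₁ w) (a b c a' b' c' : ℝ) :
    mink (vec v₀ v₁ w a b c) (vec v₀ v₁ w a' b' c') = a*a' + b*b' - c*c' := by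
  obtain ⟨h1, h2, h3, h4, h5, h6, h7⟩ := h
  simp only [mink, vec, Pi.add_apply, Pi.smul_apply, smul_eq_mul] at *
  linear_combination (a*a')*h4 + (b*b')*h5 + (c*c')*h6 + (a*b'+b*a')*h1 +
    (a*c'+c*a')*h2 + (b*c'+c*b')*h3

lemma mcross_vec {v₀ v₁ w : Fin 3 → ℝ} (h : posOrth v₀ v₁ w) (a b c a' b' c' : ℝ) :
    mcross (vec v₀ v₁ w a b c) (vec v₀ v₁ w a' b' c') =
      vec v₀ v₁ w (c*b' - b*c') (a*c' - c*a') (a*b' - b*a') := by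
  obtain ⟨h1, h2, h3, h4, h5, h6, h7⟩ := h
  have hw0 : w 0 = v₀ 2 * v₁ 1 - v₀ 1 * v₁ 2 := by rw [← h7]; rfl
  have hw1 : w 1 = v₀ 0 * v₁ 2 - v₀ 2 * v₁ 0 := by rw [← h7]; rfl
  have hw2 : w 2 = v₀ 0 * v₁ 1 - v₀ 1 * v₁ 0 := by rw [← h7]; rfl
  simp only [mink] at h1 h4 h5
  funext i
  fin_cases i <;>
    simp only [mcross, vec, Pi.add_apply, Pi.smul_apply, smul_eq_mul, Fin.isValue,
      Matrix.cons_val_zero, Matrix.cons_val_one, Matrix.head_cons, Matrix.cons_val_two,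
      Matrix.tail_cons, Fin.mk_zero, Fin.mk_one, Fin.reduceFinMk, hw0, hw1, hw2]
  · linear_combination (a*c' - c*a') * ((v₁ 0)*h4 - (v₀ 0)*h1) +
      (b*c' - c*b') * ((v₁ 0)*h1 - (v₀ 0)*h5)
  · linear_combination (a*c' - c*a') * ((v₁ 1)*h4 - (v₀ 1)*h1) +
      (b*c' - c*b') * ((v₁ 1)*h1 - (v₀ 1)*h5)
  · linear_combination (a*c' - c*a') * ((v₁ 2)*h4 - (v₀ 2)*h1) +
      (b*c' - c*b') * ((v₁ 2)*h1 - (v₀ 2)*h5)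

variable {v₀ v₁ w : Fin 3 → ℝ}

lemma vec_congr {a b c a' b' c' : ℝ} (ha : a = a') (hb : b = b') (hc : c = c') :
    vec v₀ v₁ w a b c = vec v₀ v₁ w a' b' c' := by rw [ha, hb, hc]

lemma vec_add (a b c a' b' c' : ℝ) :
    vec v₀ v₁ w a b c + vec v₀ v₁ w a' b' c' = vec v₀ v₁ w (a+a') (b+b') (c+c') := by
  unfold vec; module

lemma vec_sub (a b c a' b' c' : ℝ) :
    vec v₀ v₁ w a b c - vec v₀ v₁ w a' b' c' = vec v₀ v₁ w (a-a') (b-b') (c-c') := by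
  unfold vec; module

lemma vec_neg (a b c : ℝ) : -vec v₀ v₁ w a b c = vec v₀ v₁ w (-a) (-b) (-c) := by
  unfold vec; module

lemma vec_smul (m a b c : ℝ) : m • vec v₀ v₁ w a b c = vec v₀ v₁ w (m*a) (m*b) (m*c) := by
  unfold vec; module

lemma vec_zero : vec v₀ v₁ w 0 0 0 = 0 := by unfold vec; module

lemma vec_eq_zero {a b c : ℝ} (ha : a = 0) (hb : b = 0) (hc : c = 0) :
    vec v₀ v₁ w a b c = 0 := by rw [ha, hb, hc]; exact vec_zero

lemma hasDerivAt_vec {a b c a' b' c' : ℝ → ℝ} {t : ℝ}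
    (ha : HasDerivAt a (a' t) t) (hb : HasDerivAt b (b' t) t) (hc : HasDerivAt c (c' t) t) :
    HasDerivAt (fun u => vec v₀ v₁ w (a u) (b u) (c u)) (vec v₀ v₁ w (a' t) (b' t) (c' t)) t := by
  exact ((ha.smul_const v₀).add (hb.smul_const v₁)).add (hc.smul_const w)

lemma deriv_vec {a b c a' b' c' : ℝ → ℝ}
    (ha : ∀ t, HasDerivAt a (a' t) t) (hb : ∀ t, HasDerivAt b (b' t) t)
    (hc : ∀ t, HasDerivAt c (c' t) t) :
    deriv (fun u => vec v₀ v₁ w (a u) (b u) (c u)) = fun t => vec v₀ v₁ w (a' t) (b' t) (c' t) := by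
  funext t; exact (hasDerivAt_vec (ha t) (hb t) (hc t)).deriv

lemma hasDerivAt_rsin (r : ℝ) (t : ℝ) :
    HasDerivAt (fun u => r * Real.sin (2*π*u)) (2*π*r*Real.cos (2*π*t)) t := by
  have h : HasDerivAt (fun u : ℝ => 2*π*u) (2*π) t := by
    simpa using (hasDerivAt_id t).const_mul (2*π)
  have := ((Real.hasDerivAt_sin (2*π*t)).comp t h).const_mul r
  exact this.congr_deriv (by ring)

lemma hasDerivAt_rcos (r : ℝ) (t : ℝ) :
    HasDerivAt (fun u => r * Real.cos (2*π*u)) (-(2*π*r*Real.sin (2*π*t))) t := by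
  have h : HasDerivAt (fun u : ℝ => 2*π*u) (2*π) t := by
    simpa using (hasDerivAt_id t).const_mul (2*π)
  have := ((Real.hasDerivAt_cos (2*π*t)).comp t h).const_mul r
  exact this.congr_deriv (by ring)

set_option linter.unnecessarySeqFocus false
set_option linter.unreachableTactic false
set_option linter.unusedTactic false

lemma Hlin (t : ℝ) : HasDerivAt (fun u : ℝ => 2*π*u) (2*π) t := by
  simpa using (hasDerivAt_id t).const_mul (2*π)

lemma Hsin0 (t : ℝ) : HasDerivAt (fun u : ℝ => Real.sin (2*π*u)) (2*π*Real.cos (2*π*t)) t := by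
  have := (Real.hasDerivAt_sin (2*π*t)).comp t (Hlin t)
  exact this.congr_deriv (by ring)

lemma Hcos0 (t : ℝ) : HasDerivAt (fun u : ℝ => Real.cos (2*π*u)) (-(2*π*Real.sin (2*π*t))) t := by
  have := (Real.hasDerivAt_cos (2*π*t)).comp t (Hlin t)
  exact this.congr_deriv (by ring)

lemma Hcsin (c t : ℝ) :
    HasDerivAt (fun u : ℝ => c * Real.sin (2*π*u)) (2*π*c*Real.cos (2*π*t)) t := by
  have := (Hsin0 t).const_mul c
  exact this.congr_deriv (by ring)

lemma Hccos (c t : ℝ) :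
    HasDerivAt (fun u : ℝ => c * Real.cos (2*π*u)) (-(2*π*c*Real.sin (2*π*t))) t := by
  have := (Hcos0 t).const_mul c
  exact this.congr_deriv (by ring)

lemma Hncsin (c t : ℝ) :
    HasDerivAt (fun u : ℝ => -(c * Real.sin (2*π*u))) (-(2*π*c*Real.cos (2*π*t))) t := by
  have := (Hcsin c t).neg
  exact this.congr_deriv (by ring)

lemma Hnccos (c t : ℝ) :
    HasDerivAt (fun u : ℝ => -(c * Real.cos (2*π*u))) (2*π*c*Real.sin (2*π*t)) t := by
  have := (Hccos c t).neg
  exact this.congr_deriv (by ring)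

lemma Hsqsin (c t : ℝ) :
    HasDerivAt (fun u : ℝ => c * Real.sin (2*π*u)^2)
      (2*π*c*(2*Real.sin (2*π*t)*Real.cos (2*π*t))) t := by
  have := ((Hsin0 t).pow 2).const_mul c
  exact this.congr_deriv (by ring)

lemma Hnsqcos (c t : ℝ) :
    HasDerivAt (fun u : ℝ => -(c * Real.cos (2*π*u)^2))
      (2*π*c*(2*Real.sin (2*π*t)*Real.cos (2*π*t))) t := by
  have := (((Hcos0 t).pow 2).const_mul c).neg
  exact this.congr_deriv (by ring)

lemma Hsincos (c t : ℝ) :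
    HasDerivAt (fun u : ℝ => c * (Real.sin (2*π*u) * Real.cos (2*π*u)))
      (2*π*c*(Real.cos (2*π*t)^2 - Real.sin (2*π*t)^2)) t := by
  have := (((Hsin0 t).mul (Hcos0 t))).const_mul c
  exact this.congr_deriv (by ring)

lemma Hnsincos (c t : ℝ) :
    HasDerivAt (fun u : ℝ => -(c * (Real.sin (2*π*u) * Real.cos (2*π*u))))
      (-(2*π*c*(Real.cos (2*π*t)^2 - Real.sin (2*π*t)^2))) t := by
  have := (Hsincos c t).neg
  exact this.congr_deriv (by ring)

lemma Htsin (t : ℝ) :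
    HasDerivAt (fun u : ℝ => u * Real.sin (2*π*u))
      (Real.sin (2*π*t) + t*(2*π*Real.cos (2*π*t))) t := by
  have := (hasDerivAt_id t).mul (Hsin0 t)
  simp only [id_eq, one_mul] at this
  exact this.congr_deriv (by ring)

lemma Htcos (t : ℝ) :
    HasDerivAt (fun u : ℝ => u * Real.cos (2*π*u))
      (Real.cos (2*π*t) - t*(2*π*Real.sin (2*π*t))) t := by
  have := (hasDerivAt_id t).mul (Hcos0 t)
  simp only [id_eq, one_mul] at this
  exact this.congr_deriv (by ring)

lemma Hctlin (c t : ℝ) : HasDerivAt (fun u : ℝ => -(c*u)) (-c) t := by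
  have := ((hasDerivAt_id t).const_mul c).neg
  exact this.congr_deriv (by ring)


/-- pointwise unfolding of `covDt`. -/
lemma covDt_apply (γ V : ℝ → Fin 3 → ℝ) (t : ℝ) :
    covDt γ V t = deriv V t + mink (deriv V t) (γ t) • γ t := rfl

theorem stmt8_aux (r : ℝ) (hr : 0 < r) (v₀ v₁ w : Fin 3 → ℝ) (hsys : posOrth v₀ v₁ w)
    (k₀ : ℝ) (hk0def : k₀ = Real.sqrt (1 + r ^ 2) / r)
    (α W₀ W₁ W₂ W₃ : ℝ → Fin 3 → ℝ)
    (hαdef : α = fun t => Real.sqrt (1 + r ^ 2) • w + (r * Real.cos (2 * Real.pi * t)) • v₁ +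
        (r * Real.sin (2 * Real.pi * t)) • v₀)
    (hW0def : W₀ = fun t => t • deriv α t)
    (hW1def : W₁ = fun t => deriv α t)
    (hW2def : W₂ = fun t => Real.sqrt (1 + r ^ 2) • v₁ + (r * Real.cos (2 * Real.pi * t)) • w)
    (hW3def : W₃ = fun t => Real.sqrt (1 + r ^ 2) • v₀ + (r * Real.sin (2 * Real.pi * t)) • w) :
    (∀ t : ℝ, mink (W₀ t) (α t) = 0 ∧ mink (W₁ t) (α t) = 0 ∧
      mink (W₂ t) (α t) = 0 ∧ mink (W₃ t) (α t) = 0) ∧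
    (∀ t : ℝ, linOp k₀ α W₀ t = 0 ∧ linOp k₀ α W₁ t = 0 ∧
      linOp k₀ α W₂ t = 0 ∧ linOp k₀ α W₃ t = 0) := by
  have hs2 : Real.sqrt (1 + r ^ 2) ^ 2 = 1 + r ^ 2 := Real.sq_sqrt (by positivity)
  have hα : α = (fun t => vec v₀ v₁ w ((r * Real.sin (2 * π * t))) ((r * Real.cos (2 * π * t))) ((Real.sqrt (1 + r ^ 2)))) := by
    rw [hαdef]; funext t; simp only [vec]; module
  have hdα : deriv α = (fun t => vec v₀ v₁ w (2 * π * r * Real.cos (2 * π * t)) (-(2 * π * r * Real.sin (2 * π * t))) (0)) := by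
    rw [hα]
    exact deriv_vec (fun t => Hcsin r t) (fun t => Hccos r t)
      (fun t => hasDerivAt_const t (Real.sqrt (1 + r ^ 2)))
  have hnorm : ∀ t : ℝ, mink (deriv α t) (deriv α t) = (2 * π * r) ^ 2 := by
    intro t
    simp only [hdα, mink_vec hsys]
    have ht := Real.sin_sq_add_cos_sq (2 * π * t)
    linear_combination (((4 : ℝ) * π ^ 2 * r ^ 2)) * ht
  have hsqrt : ∀ t : ℝ, Real.sqrt (mink (deriv α t) (deriv α t)) = 2 * π * r := by
    intro t
    rw [hnorm t]
    exact Real.sqrt_sq (by positivity)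
  have hW1c : W₁ = (fun t => vec v₀ v₁ w (2 * π * r * Real.cos (2 * π * t)) (-(2 * π * r * Real.sin (2 * π * t))) (0)) := by
    rw [hW1def]; funext t; simp only [hdα]
  have hdF1 : deriv (fun t => vec v₀ v₁ w (2 * π * r * Real.cos (2 * π * t)) (-(2 * π * r * Real.sin (2 * π * t))) (0)) = (fun t => vec v₀ v₁ w (-(2 * π * (2 * π * r) * Real.sin (2 * π * t))) (-(2 * π * (2 * π * r) * Real.cos (2 * π * t))) (0)) :=
    deriv_vec (fun t => Hccos (2 * π * r) t) (fun t => Hncsin (2 * π * r) t)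
      (fun t => hasDerivAt_const t (0:ℝ))
  have hDW1 : covDt α W₁ = (fun t => vec v₀ v₁ w (-((2 * π * (2 * π * r) * (1 + r ^ 2)) * Real.sin (2 * π * t))) (-((2 * π * (2 * π * r) * (1 + r ^ 2)) * Real.cos (2 * π * t))) (-(2 * π * (2 * π * r) * (r * Real.sqrt (1 + r ^ 2))))) := by
    funext t
    simp only [covDt_apply, hW1c, hdF1]
    simp only [hα, mink_vec hsys, vec_smul, vec_add]
    refine vec_congr ?_ ?_ ?_
    · have ht := Real.sin_sq_add_cos_sq (2 * π * t)
      linear_combination (((-4 : ℝ) * π ^ 2 * r ^ 3 * Real.sin (2 * π * t))) * ht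
    · have ht := Real.sin_sq_add_cos_sq (2 * π * t)
      linear_combination (((-4 : ℝ) * π ^ 2 * r ^ 3 * Real.cos (2 * π * t))) * ht
    · have ht := Real.sin_sq_add_cos_sq (2 * π * t)
      linear_combination (((-4 : ℝ) * π ^ 2 * r ^ 2 * Real.sqrt (1 + r ^ 2))) * ht
  have hdB : deriv (fun t => vec v₀ v₁ w (-((2 * π * (2 * π * r) * (1 + r ^ 2)) * Real.sin (2 * π * t))) (-((2 * π * (2 * π * r) * (1 + r ^ 2)) * Real.cos (2 * π * t))) (-(2 * π * (2 * π * r) * (r * Real.sqrt (1 + r ^ 2))))) = (fun t => vec v₀ v₁ w (-(2 * π * (2 * π * (2 * π * r) * (1 + r ^ 2)) * Real.cos (2 * π * t))) (2 * π * (2 * π * (2 * π * r) * (1 + r ^ 2)) * Real.sin (2 * π * t)) (0)) :=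
    deriv_vec (fun t => Hncsin (2 * π * (2 * π * r) * (1 + r ^ 2)) t) (fun t => Hnccos (2 * π * (2 * π * r) * (1 + r ^ 2)) t)
      (fun t => hasDerivAt_const t (-(2 * π * (2 * π * r) * (r * Real.sqrt (1 + r ^ 2)))))
  have hD2W1 : covDt α (covDt α W₁) = (fun t => vec v₀ v₁ w (-(2 * π * (2 * π * (2 * π * r) * (1 + r ^ 2)) * Real.cos (2 * π * t))) (2 * π * (2 * π * (2 * π * r) * (1 + r ^ 2)) * Real.sin (2 * π * t)) (0)) := by
    funext t
    simp only [covDt_apply, hDW1, hdB]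
    simp only [hα, mink_vec hsys, vec_smul, vec_add]
    refine vec_congr ?_ ?_ ?_
    · ring
    · ring
    · ring
  have hW0c : W₀ = (fun t => vec v₀ v₁ w (2 * π * r * (t * Real.cos (2 * π * t))) (-(2 * π * r * (t * Real.sin (2 * π * t)))) (0)) := by
    rw [hW0def]; funext t; simp only [hdα, vec_smul]
    exact vec_congr (by ring) (by ring) (by ring)
  have hdW0c : deriv (fun t => vec v₀ v₁ w (2 * π * r * (t * Real.cos (2 * π * t))) (-(2 * π * r * (t * Real.sin (2 * π * t)))) (0)) = (fun t => vec v₀ v₁ w (2 * π * r * (Real.cos (2 * π * t) - t * (2 * π * Real.sin (2 * π * t)))) (-(2 * π * r * (Real.sin (2 * π * t) + t * (2 * π * Real.cos (2 * π * t))))) (0)) :=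
    deriv_vec (fun t => (Htcos t).const_mul (2 * π * r))
      (fun t => ((Htsin t).const_mul (2 * π * r)).neg)
      (fun t => hasDerivAt_const t (0:ℝ))
  have hDW0 : covDt α W₀ = (fun t => vec v₀ v₁ w (2 * π * r * Real.cos (2 * π * t) - (2 * π * (2 * π * r) * (1 + r ^ 2)) * (t * Real.sin (2 * π * t))) (-(2 * π * r * Real.sin (2 * π * t)) - (2 * π * (2 * π * r) * (1 + r ^ 2)) * (t * Real.cos (2 * π * t))) (-((2 * π * (2 * π * r) * (r * Real.sqrt (1 + r ^ 2))) * t))) := by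
    funext t
    simp only [covDt_apply, hW0c, hdW0c]
    simp only [hα, mink_vec hsys, vec_smul, vec_add]
    refine vec_congr ?_ ?_ ?_
    · have ht := Real.sin_sq_add_cos_sq (2 * π * t)
      linear_combination (((-4 : ℝ) * π ^ 2 * r ^ 3 * t * Real.sin (2 * π * t))) * ht
    · have ht := Real.sin_sq_add_cos_sq (2 * π * t)
      linear_combination (((-4 : ℝ) * π ^ 2 * r ^ 3 * t * Real.cos (2 * π * t))) * ht
    · have ht := Real.sin_sq_add_cos_sq (2 * π * t)
      linear_combination (((-4 : ℝ) * π ^ 2 * r ^ 2 * t * Real.sqrt (1 + r ^ 2))) * ht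
  have hdDW0 : deriv (fun t => vec v₀ v₁ w (2 * π * r * Real.cos (2 * π * t) - (2 * π * (2 * π * r) * (1 + r ^ 2)) * (t * Real.sin (2 * π * t))) (-(2 * π * r * Real.sin (2 * π * t)) - (2 * π * (2 * π * r) * (1 + r ^ 2)) * (t * Real.cos (2 * π * t))) (-((2 * π * (2 * π * r) * (r * Real.sqrt (1 + r ^ 2))) * t))) = (fun t => vec v₀ v₁ w (-(2 * π * (2 * π * r) * Real.sin (2 * π * t)) - (2 * π * (2 * π * r) * (1 + r ^ 2)) * (Real.sin (2 * π * t) + t * (2 * π * Real.cos (2 * π * t)))) (-(2 * π * (2 * π * r) * Real.cos (2 * π * t)) - (2 * π * (2 * π * r) * (1 + r ^ 2)) * (Real.cos (2 * π * t) - t * (2 * π * Real.sin (2 * π * t)))) (-(2 * π * (2 * π * r) * (r * Real.sqrt (1 + r ^ 2))))) :=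
    deriv_vec
      (fun t => (Hccos (2 * π * r) t).sub ((Htsin t).const_mul (2 * π * (2 * π * r) * (1 + r ^ 2))))
      (fun t => ((Hcsin (2 * π * r) t).neg).sub ((Htcos t).const_mul (2 * π * (2 * π * r) * (1 + r ^ 2))))
      (fun t => Hctlin (2 * π * (2 * π * r) * (r * Real.sqrt (1 + r ^ 2))) t)
  have hD2W0 : covDt α (covDt α W₀) = (fun t => vec v₀ v₁ w (-(2 * (2 * π * (2 * π * r) * (1 + r ^ 2)) * Real.sin (2 * π * t)) - t * (2 * π * (2 * π * (2 * π * r) * (1 + r ^ 2)) * Real.cos (2 * π * t))) (-(2 * (2 * π * (2 * π * r) * (1 + r ^ 2)) * Real.cos (2 * π * t)) + t * (2 * π * (2 * π * (2 * π * r) * (1 + r ^ 2)) * Real.sin (2 * π * t))) (-(2 * (2 * π * (2 * π * r) * (r * Real.sqrt (1 + r ^ 2)))))) := by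
    funext t
    simp only [covDt_apply, hDW0, hdDW0]
    simp only [hα, mink_vec hsys, vec_smul, vec_add]
    refine vec_congr ?_ ?_ ?_
    · have ht := Real.sin_sq_add_cos_sq (2 * π * t)
      linear_combination (((-8 : ℝ) * π ^ 2 * r ^ 3 * Real.sin (2 * π * t)) + ((-4 : ℝ) * π ^ 2 * r ^ 5 * Real.sin (2 * π * t))) * ht + (((4 : ℝ) * π ^ 2 * r ^ 3 * Real.sin (2 * π * t))) * hs2
    · have ht := Real.sin_sq_add_cos_sq (2 * π * t)
      linear_combination (((-8 : ℝ) * π ^ 2 * r ^ 3 * Real.cos (2 * π * t)) + ((-4 : ℝ) * π ^ 2 * r ^ 5 * Real.cos (2 * π * t))) * ht + (((4 : ℝ) * π ^ 2 * r ^ 3 * Real.cos (2 * π * t))) * hs2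
    · have ht := Real.sin_sq_add_cos_sq (2 * π * t)
      linear_combination (((-8 : ℝ) * π ^ 2 * r ^ 2 * Real.sqrt (1 + r ^ 2)) + ((-4 : ℝ) * π ^ 2 * r ^ 4 * Real.sqrt (1 + r ^ 2))) * ht + (((4 : ℝ) * π ^ 2 * r ^ 2 * Real.sqrt (1 + r ^ 2))) * hs2
  have hW2c : W₂ = (fun t => vec v₀ v₁ w (0) (Real.sqrt (1 + r ^ 2)) (r * Real.cos (2 * π * t))) := by
    rw [hW2def]; funext t; simp only [vec]; module
  have hdW2c : deriv (fun t => vec v₀ v₁ w (0) (Real.sqrt (1 + r ^ 2)) (r * Real.cos (2 * π * t))) = (fun t => vec v₀ v₁ w (0) (0) (-(2 * π * r * Real.sin (2 * π * t)))) :=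
    deriv_vec (fun t => hasDerivAt_const t (0:ℝ))
      (fun t => hasDerivAt_const t (Real.sqrt (1 + r ^ 2)))
      (fun t => Hccos r t)
  have hDW2 : covDt α W₂ = (fun t => vec v₀ v₁ w ((2 * π * r ^ 2 * Real.sqrt (1 + r ^ 2)) * Real.sin (2 * π * t) ^ 2) ((2 * π * r ^ 2 * Real.sqrt (1 + r ^ 2)) * (Real.sin (2 * π * t) * Real.cos (2 * π * t))) ((2 * π * r ^ 3) * Real.sin (2 * π * t))) := by
    funext t
    simp only [covDt_apply, hW2c, hdW2c]
    simp only [hα, mink_vec hsys, vec_smul, vec_add]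
    refine vec_congr ?_ ?_ ?_
    · ring
    · ring
    · have ht := Real.sin_sq_add_cos_sq (2 * π * t)
      linear_combination (((2 : ℝ) * π * r * Real.sin (2 * π * t))) * hs2
  have hdDW2 : deriv (fun t => vec v₀ v₁ w ((2 * π * r ^ 2 * Real.sqrt (1 + r ^ 2)) * Real.sin (2 * π * t) ^ 2) ((2 * π * r ^ 2 * Real.sqrt (1 + r ^ 2)) * (Real.sin (2 * π * t) * Real.cos (2 * π * t))) ((2 * π * r ^ 3) * Real.sin (2 * π * t))) = (fun t => vec v₀ v₁ w (2 * π * (2 * π * r ^ 2 * Real.sqrt (1 + r ^ 2)) * (2 * Real.sin (2 * π * t) * Real.cos (2 * π * t))) (2 * π * (2 * π * r ^ 2 * Real.sqrt (1 + r ^ 2)) * (Real.cos (2 * π * t) ^ 2 - Real.sin (2 * π * t) ^ 2)) (2 * π * (2 * π * r ^ 3) * Real.cos (2 * π * t))) :=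
    deriv_vec (fun t => Hsqsin (2 * π * r ^ 2 * Real.sqrt (1 + r ^ 2)) t) (fun t => Hsincos (2 * π * r ^ 2 * Real.sqrt (1 + r ^ 2)) t)
      (fun t => Hcsin (2 * π * r ^ 3) t)
  have hD2W2 : covDt α (covDt α W₂) = (fun t => vec v₀ v₁ w (2 * π * (2 * π * r ^ 2 * Real.sqrt (1 + r ^ 2)) * (2 * Real.sin (2 * π * t) * Real.cos (2 * π * t))) (2 * π * (2 * π * r ^ 2 * Real.sqrt (1 + r ^ 2)) * (Real.cos (2 * π * t) ^ 2 - Real.sin (2 * π * t) ^ 2)) (2 * π * (2 * π * r ^ 3) * Real.cos (2 * π * t))) := by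
    funext t
    simp only [covDt_apply, hDW2, hdDW2]
    simp only [hα, mink_vec hsys, vec_smul, vec_add]
    refine vec_congr ?_ ?_ ?_
    · have ht := Real.sin_sq_add_cos_sq (2 * π * t)
      linear_combination (((4 : ℝ) * π ^ 2 * r ^ 4 * Real.sqrt (1 + r ^ 2) * Real.sin (2 * π * t) * Real.cos (2 * π * t))) * ht
    · have ht := Real.sin_sq_add_cos_sq (2 * π * t)
      linear_combination (((4 : ℝ) * π ^ 2 * r ^ 4 * Real.sqrt (1 + r ^ 2) * Real.cos (2 * π * t) ^ 2)) * ht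
    · have ht := Real.sin_sq_add_cos_sq (2 * π * t)
      linear_combination (((4 : ℝ) * π ^ 2 * r ^ 3 * Real.sqrt (1 + r ^ 2) ^ 2 * Real.cos (2 * π * t))) * ht
  have hW3c : W₃ = (fun t => vec v₀ v₁ w (Real.sqrt (1 + r ^ 2)) (0) (r * Real.sin (2 * π * t))) := by
    rw [hW3def]; funext t; simp only [vec]; module
  have hdW3c : deriv (fun t => vec v₀ v₁ w (Real.sqrt (1 + r ^ 2)) (0) (r * Real.sin (2 * π * t))) = (fun t => vec v₀ v₁ w (0) (0) (2 * π * r * Real.cos (2 * π * t))) :=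
    deriv_vec (fun t => hasDerivAt_const t (Real.sqrt (1 + r ^ 2)))
      (fun t => hasDerivAt_const t (0:ℝ))
      (fun t => Hcsin r t)
  have hDW3 : covDt α W₃ = (fun t => vec v₀ v₁ w (-((2 * π * r ^ 2 * Real.sqrt (1 + r ^ 2)) * (Real.sin (2 * π * t) * Real.cos (2 * π * t)))) (-((2 * π * r ^ 2 * Real.sqrt (1 + r ^ 2)) * Real.cos (2 * π * t) ^ 2)) (-((2 * π * r ^ 3) * Real.cos (2 * π * t)))) := by
    funext t
    simp only [covDt_apply, hW3c, hdW3c]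
    simp only [hα, mink_vec hsys, vec_smul, vec_add]
    refine vec_congr ?_ ?_ ?_
    · ring
    · ring
    · have ht := Real.sin_sq_add_cos_sq (2 * π * t)
      linear_combination (((-2 : ℝ) * π * r * Real.cos (2 * π * t))) * hs2
  have hdDW3 : deriv (fun t => vec v₀ v₁ w (-((2 * π * r ^ 2 * Real.sqrt (1 + r ^ 2)) * (Real.sin (2 * π * t) * Real.cos (2 * π * t)))) (-((2 * π * r ^ 2 * Real.sqrt (1 + r ^ 2)) * Real.cos (2 * π * t) ^ 2)) (-((2 * π * r ^ 3) * Real.cos (2 * π * t)))) = (fun t => vec v₀ v₁ w (-(2 * π * (2 * π * r ^ 2 * Real.sqrt (1 + r ^ 2)) * (Real.cos (2 * π * t) ^ 2 - Real.sin (2 * π * t) ^ 2))) (2 * π * (2 * π * r ^ 2 * Real.sqrt (1 + r ^ 2)) * (2 * Real.sin (2 * π * t) * Real.cos (2 * π * t))) (2 * π * (2 * π * r ^ 3) * Real.sin (2 * π * t))) :=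
    deriv_vec (fun t => Hnsincos (2 * π * r ^ 2 * Real.sqrt (1 + r ^ 2)) t) (fun t => Hnsqcos (2 * π * r ^ 2 * Real.sqrt (1 + r ^ 2)) t)
      (fun t => Hnccos (2 * π * r ^ 3) t)
  have hD2W3 : covDt α (covDt α W₃) = (fun t => vec v₀ v₁ w (-(2 * π * (2 * π * r ^ 2 * Real.sqrt (1 + r ^ 2)) * (Real.cos (2 * π * t) ^ 2 - Real.sin (2 * π * t) ^ 2))) (2 * π * (2 * π * r ^ 2 * Real.sqrt (1 + r ^ 2)) * (2 * Real.sin (2 * π * t) * Real.cos (2 * π * t))) (2 * π * (2 * π * r ^ 3) * Real.sin (2 * π * t))) := by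
    funext t
    simp only [covDt_apply, hDW3, hdDW3]
    simp only [hα, mink_vec hsys, vec_smul, vec_add]
    refine vec_congr ?_ ?_ ?_
    · have ht := Real.sin_sq_add_cos_sq (2 * π * t)
      linear_combination (((4 : ℝ) * π ^ 2 * r ^ 4 * Real.sqrt (1 + r ^ 2) * Real.sin (2 * π * t) ^ 2)) * ht
    · have ht := Real.sin_sq_add_cos_sq (2 * π * t)
      linear_combination (((4 : ℝ) * π ^ 2 * r ^ 4 * Real.sqrt (1 + r ^ 2) * Real.sin (2 * π * t) * Real.cos (2 * π * t))) * ht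
    · have ht := Real.sin_sq_add_cos_sq (2 * π * t)
      linear_combination (((4 : ℝ) * π ^ 2 * r ^ 3 * Real.sqrt (1 + r ^ 2) ^ 2 * Real.sin (2 * π * t))) * ht
  have hM0 : ∀ t : ℝ, mink (covDt α W₀ t) (deriv α t) = (2 * π * r) ^ 2 := by
    intro t
    simp only [hDW0, hdα, mink_vec hsys]
    have ht := Real.sin_sq_add_cos_sq (2 * π * t)
    linear_combination (((4 : ℝ) * π ^ 2 * r ^ 2)) * ht
  have hM1 : ∀ t : ℝ, mink (covDt α W₁ t) (deriv α t) = 0 := by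
    intro t
    simp only [hDW1, hdα, mink_vec hsys]
    ring
  have hM2 : ∀ t : ℝ, mink (covDt α W₂ t) (deriv α t) = 0 := by
    intro t
    simp only [hDW2, hdα, mink_vec hsys]
    ring
  have hM3 : ∀ t : ℝ, mink (covDt α W₃ t) (deriv α t) = 0 := by
    intro t
    simp only [hDW3, hdα, mink_vec hsys]
    ring
  have hcoef4 : (2 * π * r)⁻¹ * (2 * π * r) ^ 2 * k₀ = 2 * π * Real.sqrt (1 + r ^ 2) := by
    rw [hk0def]; field_simp; try ring
  have hcoef5 : 2 * π * r * k₀ = 2 * π * Real.sqrt (1 + r ^ 2) := by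
    rw [hk0def]; field_simp; try ring
  constructor
  · intro t
    refine ⟨?_, ?_, ?_, ?_⟩
    · simp only [hW0c, hα, mink_vec hsys]; ring
    · simp only [hW1c, hα, mink_vec hsys]; ring
    · simp only [hW2c, hα, mink_vec hsys]; ring
    · simp only [hW3c, hα, mink_vec hsys]; ring
  · intro t
    refine ⟨?_, ?_, ?_, ?_⟩
    · simp only [linOp]
      rw [hD2W0, hM0 t, hsqrt t, hnorm t, hcoef5]
      rw [hcoef4]
      simp only [hDW0]
      simp only [hdα]
      simp only [hW0c]
      simp only [hα]
      simp only [mink_vec hsys, mcross_vec hsys, vec_smul, vec_neg, vec_add, vec_sub]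
      refine vec_eq_zero ?_ ?_ ?_
      · have ht := Real.sin_sq_add_cos_sq (2 * π * t)
        linear_combination (((-8 : ℝ) * π ^ 3 * r ^ 3 * t * Real.cos (2 * π * t))) * ht + (((-8 : ℝ) * π ^ 2 * r * Real.sin (2 * π * t)) + ((-8 : ℝ) * π ^ 3 * r * t * Real.cos (2 * π * t))) * hs2
      · have ht := Real.sin_sq_add_cos_sq (2 * π * t)
        linear_combination (((8 : ℝ) * π ^ 3 * r ^ 3 * t * Real.sin (2 * π * t))) * ht + (((-8 : ℝ) * π ^ 2 * r * Real.cos (2 * π * t)) + ((8 : ℝ) * π ^ 3 * r * t * Real.sin (2 * π * t))) * hs2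
      · have ht := Real.sin_sq_add_cos_sq (2 * π * t)
        linear_combination (((-8 : ℝ) * π ^ 2 * r ^ 2 * Real.sqrt (1 + r ^ 2))) * ht
    · simp only [linOp]
      rw [hD2W1, hM1 t, hsqrt t, hnorm t, hcoef5]
      rw [mul_zero, zero_mul]
      simp only [hDW1]
      simp only [hdα]
      simp only [hW1c]
      simp only [hα]
      simp only [mink_vec hsys, mcross_vec hsys, vec_smul, vec_neg, vec_add, vec_sub]
      refine vec_eq_zero ?_ ?_ ?_
      · have ht := Real.sin_sq_add_cos_sq (2 * π * t)
        linear_combination (((-8 : ℝ) * π ^ 3 * r ^ 3 * Real.cos (2 * π * t))) * ht + (((-8 : ℝ) * π ^ 3 * r * Real.cos (2 * π * t))) * hs2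
      · have ht := Real.sin_sq_add_cos_sq (2 * π * t)
        linear_combination (((8 : ℝ) * π ^ 3 * r ^ 3 * Real.sin (2 * π * t))) * ht + (((8 : ℝ) * π ^ 3 * r * Real.sin (2 * π * t))) * hs2
      · ring
    · simp only [linOp]
      rw [hD2W2, hM2 t, hsqrt t, hnorm t, hcoef5]
      rw [mul_zero, zero_mul]
      simp only [hDW2]
      simp only [hdα]
      simp only [hW2c]
      simp only [hα]
      simp only [mink_vec hsys, mcross_vec hsys, vec_smul, vec_neg, vec_add, vec_sub]
      refine vec_eq_zero ?_ ?_ ?_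
      · have ht := Real.sin_sq_add_cos_sq (2 * π * t)
        linear_combination (((4 : ℝ) * π ^ 2 * r ^ 2 * Real.sqrt (1 + r ^ 2) * Real.sin (2 * π * t) * Real.cos (2 * π * t))) * hs2
      · have ht := Real.sin_sq_add_cos_sq (2 * π * t)
        linear_combination (((-4 : ℝ) * π ^ 2 * r ^ 2 * Real.sqrt (1 + r ^ 2) ^ 3) + ((4 : ℝ) * π ^ 2 * r ^ 4 * Real.sqrt (1 + r ^ 2))) * ht + (((-4 : ℝ) * π ^ 2 * r ^ 2 * Real.sqrt (1 + r ^ 2)) + ((4 : ℝ) * π ^ 2 * r ^ 2 * Real.sqrt (1 + r ^ 2) * Real.cos (2 * π * t) ^ 2)) * hs2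
      · ring
    · simp only [linOp]
      rw [hD2W3, hM3 t, hsqrt t, hnorm t, hcoef5]
      rw [mul_zero, zero_mul]
      simp only [hDW3]
      simp only [hdα]
      simp only [hW3c]
      simp only [hα]
      simp only [mink_vec hsys, mcross_vec hsys, vec_smul, vec_neg, vec_add, vec_sub]
      refine vec_eq_zero ?_ ?_ ?_
      · have ht := Real.sin_sq_add_cos_sq (2 * π * t)
        linear_combination (((-4 : ℝ) * π ^ 2 * r ^ 2 * Real.sqrt (1 + r ^ 2))) * ht + (((-4 : ℝ) * π ^ 2 * r ^ 2 * Real.sqrt (1 + r ^ 2) * Real.cos (2 * π * t) ^ 2)) * hs2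
      · have ht := Real.sin_sq_add_cos_sq (2 * π * t)
        linear_combination (((4 : ℝ) * π ^ 2 * r ^ 2 * Real.sqrt (1 + r ^ 2) * Real.sin (2 * π * t) * Real.cos (2 * π * t))) * hs2
      · ring


/-- the vector fields W₀, W₁, W₂, W₃ are tangent to ℍ along α and solve
the linearized prescribed geodesic curvature equation. -/
theorem stmt_8 (r : ℝ) (hr : 0 < r) (v₀ v₁ w : Fin 3 → ℝ) (hsys : posOrth v₀ v₁ w) :
    let k₀ : ℝ := Real.sqrt (1 + r ^ 2) / r
    let α : ℝ → Fin 3 → ℝ := fun t =>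
      Real.sqrt (1 + r ^ 2) • w + (r * Real.cos (2 * Real.pi * t)) • v₁ +
        (r * Real.sin (2 * Real.pi * t)) • v₀
    let W₀ : ℝ → Fin 3 → ℝ := fun t => t • deriv α t
    let W₁ : ℝ → Fin 3 → ℝ := fun t => deriv α t
    let W₂ : ℝ → Fin 3 → ℝ := fun t =>
      Real.sqrt (1 + r ^ 2) • v₁ + (r * Real.cos (2 * Real.pi * t)) • w
    let W₃ : ℝ → Fin 3 → ℝ := fun t =>
      Real.sqrt (1 + r ^ 2) • v₀ + (r * Real.sin (2 * Real.pi * t)) • w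
    (∀ t : ℝ, mink (W₀ t) (α t) = 0 ∧ mink (W₁ t) (α t) = 0 ∧
      mink (W₂ t) (α t) = 0 ∧ mink (W₃ t) (α t) = 0) ∧
    (∀ t : ℝ, linOp k₀ α W₀ t = 0 ∧ linOp k₀ α W₁ t = 0 ∧
      linOp k₀ α W₂ t = 0 ∧ linOp k₀ α W₃ t = 0) := by
  intro k₀ α W₀ W₁ W₂ W₃
  exact stmt8_aux r hr v₀ v₁ w hsys k₀ rfl α W₀ W₁ W₂ W₃ rfl rfl rfl rfl rfl
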